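/- Fix m, l, g > 0, ρ ∈ ℝ, I₁, I₃ > 0, and set 𝕀 = diag(I₁, I₁, I₃) and χ = e₃ = (0,0,1). If Ω, v, Γ : ℝ → ℝ³ solve the closed-loop Euler–Poincaré system with these data, then the third component Ω₃(t) of Ω(t) is constant in t. -/

import Mathlib

open Matrix

/-- The closed-loop Euler–Poincaré system: with `μ = 𝕀Ω + m l (χ × v)` and
`p = ρ v + m l (Ω × χ)`, the curves satisfy
`μ' = μ × Ω + p × v − m g l (χ × Γ)`, `p' = p × Ω`, `Γ' = Γ × Ω`. -/
def ClosedLoopEP (m l g ρ : ℝ) (χ : Fin 3 → ℝ) (I : Matrix (Fin 3) (Fin 3) ℝ)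
    (Ω v Γ : ℝ → Fin 3 → ℝ) : Prop :=
  Differentiable ℝ Ω ∧ Differentiable ℝ v ∧ Differentiable ℝ Γ ∧
  (∀ t, deriv (fun s => I *ᵥ Ω s + (m * l) • (χ ⨯₃ v s)) t
      = (I *ᵥ Ω t + (m * l) • (χ ⨯₃ v t)) ⨯₃ Ω t
        + (ρ • v t + (m * l) • (Ω t ⨯₃ χ)) ⨯₃ v t - (m * g * l) • (χ ⨯₃ Γ t)) ∧
  (∀ t, deriv (fun s => ρ • v s + (m * l) • (Ω s ⨯₃ χ)) t
      = (ρ • v t + (m * l) • (Ω t ⨯₃ χ)) ⨯₃ Ω t) ∧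
  (∀ t, deriv Γ t = Γ t ⨯₃ Ω t)

/-- For the Lagrange top (`𝕀 = diag(I₁, I₁, I₃)`, `χ = e₃`), the third component of
the body angular velocity is constant along solutions of the closed-loop system. -/
theorem omega3_constant (m l g ρ : ℝ) (hm : 0 < m) (hl : 0 < l) (hg : 0 < g)
    (I₁ I₃ : ℝ) (hI₁ : 0 < I₁) (hI₃ : 0 < I₃)
    (Ω v Γ : ℝ → Fin 3 → ℝ)
    (hsol : ClosedLoopEP m l g ρ ![(0 : ℝ), 0, 1] (Matrix.diagonal ![I₁, I₁, I₃]) Ω v Γ) :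
    ∀ t, Ω t 2 = Ω 0 2 := by
  obtain ⟨hΩ, hv, hΓ, hμ, hp, hΓeq⟩ := hsol
  set χ : Fin 3 → ℝ := ![(0 : ℝ), 0, 1] with hχ
  set I : Matrix (Fin 3) (Fin 3) ℝ := Matrix.diagonal ![I₁, I₁, I₃] with hI
  have hΩi : ∀ i, Differentiable ℝ fun s => Ω s i := differentiable_pi.mp hΩ
  have hvi : ∀ i, Differentiable ℝ fun s => v s i := differentiable_pi.mp hv
  -- differentiability of μ
  have hF : Differentiable ℝ (fun s => I *ᵥ Ω s + (m * l) • (χ ⨯₃ v s)) := by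
    have h1 : Differentiable ℝ fun s => I *ᵥ Ω s := by
      have := (I.mulVecLin.toContinuousLinearMap.differentiable).comp hΩ
      exact this
    have h2 : Differentiable ℝ fun s => χ ⨯₃ v s :=
      ((crossProduct χ).toContinuousLinearMap.differentiable).comp hv
    exact h1.add (h2.const_smul (m * l) : Differentiable ℝ fun s => (m * l) • (χ ⨯₃ v s))
  have key : ∀ t, deriv (fun s => I₃ * Ω s 2) t = 0 := by
    intro t
    have h1 : HasDerivAt (fun s => I *ᵥ Ω s + (m * l) • (χ ⨯₃ v s))
        (deriv (fun s => I *ᵥ Ω s + (m * l) • (χ ⨯₃ v s)) t) t := (hF t).hasDerivAt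
    have h2 := (hasDerivAt_pi.mp h1) 2
    have h3 : (fun s => (I *ᵥ Ω s + (m * l) • (χ ⨯₃ v s)) 2) = fun s => I₃ * Ω s 2 := by
      funext s
      simp [hI, hχ, Matrix.mulVec, Matrix.diagonal, dotProduct, Fin.sum_univ_three,
        cross_apply]
    rw [h3] at h2
    rw [h2.deriv]
    have h4 := congrFun (hμ t) 2
    rw [h4]
    simp [hI, hχ, Matrix.mulVec, Matrix.diagonal, dotProduct, Fin.sum_univ_three, cross_apply,
      Matrix.vecHead, Matrix.vecTail, Matrix.of_apply, Pi.smul_apply, smul_eq_mul,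
      Function.comp]
    ring
  intro t
  have hd : Differentiable ℝ (fun s => I₃ * Ω s 2) := (differentiable_const _).mul (hΩi 2)
  have := is_const_of_deriv_eq_zero hd key t 0
  have hI₃' : I₃ ≠ 0 := ne_of_gt hI₃
  field_simp at this
  linarith
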